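/- Let A be the mod-2 reduction of the adjacency matrix of an Eulerian graph on an even number of vertices, viewed over F̄_2. Then every Jordan block of A for the eigenvalue 0 has size at most half the algebraic multiplicity of 0. -/

import Mathlib

open Matrix Polynomial Module LinearMap

set_option linter.unusedSectionVars false

variable {K : Type*} [Field K] [CharP K 2] {N : ℕ}


private lemma vecMulVec_mulVec' (w x y : Fin N → K) :
    vecMulVec w x *ᵥ y = (x ⬝ᵥ y) • w := by
  ext k
  simp [vecMulVec_apply, mulVec, dotProduct, Finset.mul_sum, mul_comm, mul_left_comm,
    smul_eq_mul]

private lemma alt_step' (B : Matrix (Fin N) (Fin N) K) (hsym : Bᵀ = B) (hdiag : ∀ i, B i i = 0)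
    {i j : Fin N} (hij : B i j ≠ 0) :
    ∃ B' : Matrix (Fin N) (Fin N) K, B'ᵀ = B' ∧ (∀ l, B' l l = 0) ∧
      Module.finrank K (LinearMap.ker B'.mulVecLin)
        = Module.finrank K (LinearMap.ker B.mulVecLin) + 2 := by
  classical
  have h2 : ∀ a : K, a + a = 0 := fun a => CharTwo.add_self_eq_zero a
  set u : Fin N → K := Pi.single i 1 with hu
  set v : Fin N → K := Pi.single j 1 with hv
  set p : Fin N → K := B *ᵥ u with hp
  set q : Fin N → K := B *ᵥ v with hq
  set c : K := B i j with hc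
  have hsym' : ∀ k l, B k l = B l k := by
    intro k l; exact congrFun (congrFun hsym l) k
  have hBdot : ∀ x y : Fin N → K, (B *ᵥ x) ⬝ᵥ y = x ⬝ᵥ (B *ᵥ y) := by
    intro x y
    simp only [dotProduct, mulVec, Finset.sum_mul, Finset.mul_sum]
    rw [Finset.sum_comm]
    refine Finset.sum_congr rfl fun a _ => Finset.sum_congr rfl fun b _ => ?_
    rw [hsym' b a]; ring
  have hpk : ∀ k, p k = B k i := by
    intro k; simp [hp, hu, mulVec, dotProduct]
  have hqk : ∀ k, q k = B k j := by
    intro k; simp [hq, hv, mulVec, dotProduct]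
  have hij' : i ≠ j := by
    rintro rfl; exact hij (hdiag i)
  have hqu : q ⬝ᵥ u = c := by simp [hu, hqk, hc]
  have hpu : p ⬝ᵥ u = 0 := by simp [hu, hpk, hdiag i]
  have hqv : q ⬝ᵥ v = 0 := by simp [hv, hqk, hdiag j]
  have hpv : p ⬝ᵥ v = c := by simp [hv, hpk, hsym' j i, hc]
  set B' : Matrix (Fin N) (Fin N) K := B + c⁻¹ • (vecMulVec p q + vecMulVec q p) with hB'
  have hB'sym : B'ᵀ = B' := by
    have h1 : (vecMulVec p q)ᵀ = vecMulVec q p := by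
      ext k l; simp [vecMulVec_apply, mul_comm]
    have h2' : (vecMulVec q p)ᵀ = vecMulVec p q := by
      ext k l; simp [vecMulVec_apply, mul_comm]
    simp [hB', transpose_add, transpose_smul, h1, h2', hsym, add_comm]
  have hB'diag : ∀ l, B' l l = 0 := by
    intro l
    simp only [hB', Matrix.add_apply, Matrix.smul_apply, vecMulVec_apply, smul_eq_mul, hdiag l]
    rw [mul_comm (q l) (p l), h2, mul_zero, add_zero]
  have hB'mul : ∀ x, B' *ᵥ x = B *ᵥ x + ((c⁻¹ * (q ⬝ᵥ x)) • p + (c⁻¹ * (p ⬝ᵥ x)) • q) := by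
    intro x
    rw [hB', add_mulVec, smul_mulVec, add_mulVec, vecMulVec_mulVec', vecMulVec_mulVec',
      smul_add, smul_smul, smul_smul]
  -- kernel of B is inside kernel of B'
  have hkerB : LinearMap.ker B.mulVecLin ≤ LinearMap.ker B'.mulVecLin := by
    intro x hx
    rw [LinearMap.mem_ker, mulVecLin_apply] at hx ⊢
    have hqx : q ⬝ᵥ x = 0 := by rw [hq, hBdot, hx, dotProduct_zero]
    have hpx : p ⬝ᵥ x = 0 := by rw [hp, hBdot, hx, dotProduct_zero]
    rw [hB'mul, hx, hqx, hpx]; simp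
  have hu' : u ∈ LinearMap.ker B'.mulVecLin := by
    rw [LinearMap.mem_ker, mulVecLin_apply, hB'mul, hqu, hpu, mul_zero, zero_smul, add_zero,
      inv_mul_cancel₀ hij, one_smul, ← hp]
    ext k; exact h2 _
  have hv' : v ∈ LinearMap.ker B'.mulVecLin := by
    rw [LinearMap.mem_ker, mulVecLin_apply, hB'mul, hqv, hpv, mul_zero, zero_smul, zero_add,
      inv_mul_cancel₀ hij, one_smul, ← hq]
    ext k; exact h2 _
  have hker_eq : LinearMap.ker B'.mulVecLin
      = LinearMap.ker B.mulVecLin ⊔ Submodule.span K {u, v} := by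
    apply le_antisymm
    · intro x hx
      rw [LinearMap.mem_ker, mulVecLin_apply, hB'mul] at hx
      set α : K := c⁻¹ * (q ⬝ᵥ x) with hα
      set β : K := c⁻¹ * (p ⬝ᵥ x) with hβ
      have hz : x + (α • u + β • v) ∈ LinearMap.ker B.mulVecLin := by
        rw [LinearMap.mem_ker, mulVecLin_apply, mulVec_add, mulVec_add, mulVec_smul, mulVec_smul,
          ← hp, ← hq]
        have hneg : -(α • p + β • q) = α • p + β • q := by
          ext k; rw [Pi.neg_apply, neg_eq_iff_add_eq_zero]; exact h2 _
        have hBx : B *ᵥ x = α • p + β • q :=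
          (eq_neg_of_add_eq_zero_left hx).trans hneg
        rw [hBx]
        ext k; simp only [Pi.add_apply, Pi.zero_apply]; exact h2 _
      have hs : α • u + β • v ∈ Submodule.span K ({u, v} : Set (Fin N → K)) :=
        Submodule.add_mem _
          (Submodule.smul_mem _ _ (Submodule.subset_span (Set.mem_insert _ _)))
          (Submodule.smul_mem _ _ (Submodule.subset_span (Set.mem_insert_of_mem _ rfl)))
      have : x = (x + (α • u + β • v)) + (α • u + β • v) := by
        rw [add_assoc]; nth_rewrite 1 [← add_zero x]
        congr 1
        ext k; simp only [Pi.add_apply, Pi.zero_apply]; exact (h2 _).symm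
      rw [this]
      exact Submodule.add_mem _ (Submodule.mem_sup_left hz) (Submodule.mem_sup_right hs)
    · refine sup_le hkerB ?_
      rw [Submodule.span_le]
      rintro x (rfl | rfl)
      · exact hu'
      · exact hv'
  have hinf : LinearMap.ker B.mulVecLin ⊓ Submodule.span K ({u, v} : Set (Fin N → K)) = ⊥ := by
    rw [eq_bot_iff]
    intro x hx
    rw [Submodule.mem_inf] at hx
    obtain ⟨hxk, hxs⟩ := hx
    obtain ⟨γ, δ, rfl⟩ := Submodule.mem_span_pair.1 hxs
    rw [LinearMap.mem_ker, mulVecLin_apply] at hxk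
    have hq0 : q ⬝ᵥ (γ • u + δ • v) = 0 := by rw [hq, hBdot, hxk, dotProduct_zero]
    have hp0 : p ⬝ᵥ (γ • u + δ • v) = 0 := by rw [hp, hBdot, hxk, dotProduct_zero]
    rw [dotProduct_add, dotProduct_smul, dotProduct_smul, hqu, hqv, smul_eq_mul, smul_eq_mul,
      mul_zero, add_zero] at hq0
    rw [dotProduct_add, dotProduct_smul, dotProduct_smul, hpu, hpv, smul_eq_mul, smul_eq_mul,
      mul_zero, zero_add] at hp0
    have hγ : γ = 0 := by
      rcases mul_eq_zero.1 hq0 with h | h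
      · exact h
      · exact absurd h hij
    have hδ : δ = 0 := by
      rcases mul_eq_zero.1 hp0 with h | h
      · exact h
      · exact absurd h hij
    rw [hγ, hδ, zero_smul, zero_smul, add_zero]
    exact Submodule.zero_mem ⊥
  have hspan2 : Module.finrank K (Submodule.span K ({u, v} : Set (Fin N → K))) = 2 := by
    have hli : LinearIndependent K ![u, v] := by
      refine LinearIndependent.pair_iff.2 fun s t hst => ?_
      have hi := congrFun hst i
      have hj := congrFun hst j
      simp only [Pi.add_apply, Pi.smul_apply, hu, hv, smul_eq_mul, Pi.zero_apply,
        Pi.single_eq_same, Pi.single_eq_of_ne hij'.symm, Pi.single_eq_of_ne hij',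
        mul_one, mul_zero, add_zero, zero_add] at hi hj
      exact ⟨hi, hj⟩
    have hrange : Set.range ![u, v] = {u, v} := by
      simp [Matrix.range_cons, Matrix.range_empty, Set.pair_comm]
    have := finrank_span_eq_card hli
    rw [hrange] at this
    simpa using this
  have hdim := Submodule.finrank_sup_add_finrank_inf_eq (LinearMap.ker B.mulVecLin)
    (Submodule.span K ({u, v} : Set (Fin N → K)))
  rw [hinf, finrank_bot, add_zero, hspan2] at hdim
  exact ⟨B', hB'sym, hB'diag, by rw [hker_eq, hdim]⟩



private lemma even_finrank_ker (hN : Even N) :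
    ∀ (r : ℕ) (B : Matrix (Fin N) (Fin N) K), Bᵀ = B → (∀ i, B i i = 0) →
      N - Module.finrank K (LinearMap.ker B.mulVecLin) ≤ r →
      Even (Module.finrank K (LinearMap.ker B.mulVecLin)) := by
  intro r
  induction r with
  | zero =>
    intro B hsym hdiag hle
    have h1 : Module.finrank K (LinearMap.ker B.mulVecLin) ≤ N := by
      have := Submodule.finrank_le (LinearMap.ker B.mulVecLin)
      rwa [Module.finrank_pi, Fintype.card_fin] at this
    have h2 : Module.finrank K (LinearMap.ker B.mulVecLin) = N := by omega
    rw [h2]; exact hN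
  | succ r ih =>
    intro B hsym hdiag hle
    by_cases hB : B = 0
    · subst hB
      rw [Matrix.mulVecLin_zero, LinearMap.ker_zero, finrank_top, Module.finrank_pi,
        Fintype.card_fin]
      exact hN
    · have hex : ∃ i j, B i j ≠ 0 := by
        by_contra h
        push_neg at h
        exact hB (by ext i j; exact h i j)
      obtain ⟨i, j, hij⟩ := hex
      obtain ⟨B', hs, hd, hrank⟩ := alt_step' B hsym hdiag hij
      have hB' := ih B' hs hd (by omega)
      rw [hrank] at hB'
      obtain ⟨t, ht⟩ := hB'
      exact ⟨t - 1, by omega⟩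

private lemma dot_mulVec_symm (B : Matrix (Fin N) (Fin N) K) (hsym : Bᵀ = B)
    (x y : Fin N → K) : (B *ᵥ x) ⬝ᵥ y = x ⬝ᵥ (B *ᵥ y) := by
  have hsym' : ∀ k l, B k l = B l k := fun k l => congrFun (congrFun hsym l) k
  simp only [dotProduct, mulVec, Finset.sum_mul, Finset.mul_sum]
  rw [Finset.sum_comm]
  refine Finset.sum_congr rfl fun a _ => Finset.sum_congr rfl fun b _ => ?_
  rw [hsym' b a]; ring

private lemma quad_zero (B : Matrix (Fin N) (Fin N) K) (hsym : Bᵀ = B)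
    (hdiag : ∀ i, B i i = 0) (y : Fin N → K) : y ⬝ᵥ (B *ᵥ y) = 0 := by
  have hsym' : ∀ k l, B k l = B l k := fun k l => congrFun (congrFun hsym l) k
  have h2 : ∀ a : K, a + a = 0 := fun a => CharTwo.add_self_eq_zero a
  have hrw : y ⬝ᵥ (B *ᵥ y)
      = ∑ x ∈ Finset.univ ×ˢ Finset.univ, y x.1 * B x.1 x.2 * y x.2 := by
    rw [Finset.sum_product]
    simp [dotProduct, mulVec, Finset.mul_sum, mul_assoc]
  rw [hrw]
  apply Finset.sum_ninvolution Prod.swap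
  · intro a
    simp only [Prod.fst_swap, Prod.snd_swap]
    have : y a.2 * B a.2 a.1 * y a.1 = y a.1 * B a.1 a.2 * y a.2 := by
      rw [hsym' a.2 a.1]; ring
    rw [this]; exact h2 _
  · intro a hfa heq
    obtain ⟨a1, a2⟩ := a
    have h21 : a2 = a1 := congrArg Prod.fst heq
    apply hfa
    rw [h21, hdiag a1, mul_zero, zero_mul]
  · intro a; exact Finset.mem_univ _
  · intro a; exact Prod.swap_swap a

private lemma ones_dot_mulVec (B : Matrix (Fin N) (Fin N) K) (hsym : Bᵀ = B)
    (hrow : ∀ i, ∑ l, B i l = 0) (z : Fin N → K) : ∑ k, (B *ᵥ z) k = 0 := by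
  have hsym' : ∀ k l, B k l = B l k := fun k l => congrFun (congrFun hsym l) k
  have : ∑ k, (B *ᵥ z) k = ∑ l, (∑ k, B k l) * z l := by
    simp only [mulVec, dotProduct]
    rw [Finset.sum_comm]
    exact Finset.sum_congr rfl fun l _ => by rw [Finset.sum_mul]
  rw [this]
  refine Finset.sum_eq_zero fun l _ => ?_
  have : ∑ k, B k l = ∑ k, B l k := Finset.sum_congr rfl fun k _ => hsym' k l
  rw [this, hrow l, zero_mul]

private lemma diag_pow (B : Matrix (Fin N) (Fin N) K) (hsym : Bᵀ = B)
    (hdiag : ∀ i, B i i = 0) (hrow : ∀ i, ∑ l, B i l = 0) :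
    ∀ k, 1 ≤ k → ∀ i, (B ^ k) i i = 0 := by
  haveI : Fact (Nat.Prime 2) := ⟨Nat.prime_two⟩
  intro k hk i
  have hsymp : ∀ s : ℕ, (B ^ s)ᵀ = B ^ s := by
    intro s; rw [Matrix.transpose_pow, hsym]
  set u : Fin N → K := Pi.single i 1 with hu
  have hentry : ∀ M : Matrix (Fin N) (Fin N) K, M i i = u ⬝ᵥ (M *ᵥ u) := by
    intro M
    rw [hu, single_dotProduct, one_mul]
    show M i i = (M i) ⬝ᵥ Pi.single i 1
    rw [dotProduct_single, mul_one]
  rcases Nat.even_or_odd k with ⟨j, hj⟩ | ⟨j, hj⟩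
  · -- k = j + j with j ≥ 1
    have hj1 : 1 ≤ j := by omega
    set y : Fin N → K := B ^ j *ᵥ u with hy
    have h1 : (B ^ k) i i = y ⬝ᵥ y := by
      rw [hentry (B ^ k), hj, pow_add, ← Matrix.mulVec_mulVec, ← hy,
        ← dot_mulVec_symm (B ^ j) (hsymp j) u y, ← hy]
    have h2 : y ⬝ᵥ y = (∑ l, y l) ^ 2 := by
      rw [sum_pow_char]
      simp [dotProduct, sq]
    have h3 : ∑ l, y l = 0 := by
      have hyy : y = B *ᵥ (B ^ (j - 1) *ᵥ u) := by
        have hpj : B ^ j = B * B ^ (j - 1) := by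
          conv_lhs => rw [show j = 1 + (j - 1) from by omega]
          rw [pow_add, pow_one]
        rw [hy, Matrix.mulVec_mulVec, hpj]
      rw [hyy]
      exact ones_dot_mulVec B hsym hrow _
    rw [h1, h2, h3]
    ring
  · -- k = 2 * j + 1
    set y : Fin N → K := B ^ j *ᵥ u with hy
    have h1 : (B ^ k) i i = y ⬝ᵥ (B *ᵥ y) := by
      rw [hentry (B ^ k), hj, show 2 * j + 1 = j + 1 + j from by omega, pow_add, pow_add,
        pow_one, mul_assoc, ← Matrix.mulVec_mulVec, ← Matrix.mulVec_mulVec,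
        ← dot_mulVec_symm (B ^ j) (hsymp j) u _, ← hy]
    rw [h1]
    exact quad_zero B hsym hdiag y

set_option maxHeartbeats 1000000 in
set_option synthInstance.maxHeartbeats 400000 in
/-- Let `A` be the mod-2 reduction of the adjacency matrix of an Eulerian graph on an even
number of vertices, viewed over `F̄₂`. Then every Jordan block of `A` for the eigenvalue `0`
has size at most half the algebraic multiplicity of `0`: the largest block size is the
multiplicity of `0` as a root of the minimal polynomial. -/
theorem jordan_block_size_le_half_multiplicity_of_zero {n : ℕ} (hn : Even n)
    (G : SimpleGraph (Fin n)) [DecidableRel G.Adj]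
    (hconn : G.Connected) (hdeg : ∀ v, Even (G.degree v)) :
    2 * (minpoly (AlgebraicClosure (ZMod 2))
          (G.adjMatrix (AlgebraicClosure (ZMod 2)))).rootMultiplicity 0
      ≤ (G.adjMatrix (AlgebraicClosure (ZMod 2))).charpoly.rootMultiplicity 0 := by
  classical
  set K' := AlgebraicClosure (ZMod 2) with hK
  haveI : CharP K' 2 := charP_of_injective_algebraMap (algebraMap (ZMod 2) K').injective 2
  set A : Matrix (Fin n) (Fin n) K' := G.adjMatrix K' with hA
  have hsym : Aᵀ = A := G.transpose_adjMatrix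
  have hdiag : ∀ i, A i i = 0 := fun i => by simp [hA]
  have h2 : ∀ a : K', a + a = 0 := fun a => CharTwo.add_self_eq_zero a
  have hrow : ∀ i, ∑ l, A i l = 0 := by
    intro i
    have h1 : ∑ l, A i l = ((G.degree i : ℕ) : K') := by
      simp [hA, Finset.sum_boole, SimpleGraph.degree, SimpleGraph.neighborFinset_eq_filter]
    obtain ⟨t, ht⟩ := hdeg i
    rw [h1, ht, Nat.cast_add, h2]
  set φ : Module.End K' (Fin n → K') := Matrix.mulVecLin A with hφ
  set m := (minpoly K' A).rootMultiplicity 0 with hm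
  have hmin : minpoly K' φ = minpoly K' A := by
    rw [hφ, ← Matrix.toLin'_apply', Matrix.minpoly_toLin']
  have hchar : LinearMap.charpoly φ = A.charpoly := by
    have hM : LinearMap.toMatrix' φ = A := by
      rw [hφ, ← Matrix.toLin'_apply', LinearMap.toMatrix'_toLin']
    have hc := LinearMap.charpoly_toMatrix φ (Pi.basisFun K' (Fin n))
    rw [LinearMap.toMatrix_eq_toMatrix', hM] at hc
    exact hc.symm
  have hpow : ∀ k, φ ^ k = (A ^ k).mulVecLin := by
    intro k
    induction k with
    | zero => rw [pow_zero, pow_zero, Matrix.mulVecLin_one]; rfl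
    | succ k ih => rw [pow_succ, pow_succ, Matrix.mulVecLin_mul, ih]; rfl
  have heven : ∀ k, 1 ≤ k → Even (Module.finrank K' (LinearMap.ker (φ ^ k))) := by
    intro k hk
    rw [hpow k]
    refine even_finrank_ker hn n (A ^ k) ?_ (diag_pow A hsym hdiag hrow k hk) ?_
    · rw [Matrix.transpose_pow, hsym]
    · omega
  have hint : IsIntegral K' φ := IsIntegral.of_finite K' φ
  have hne0 : minpoly K' φ ≠ 0 := minpoly.ne_zero hint
  have hXm : X ^ m ∣ minpoly K' φ := by
    rw [hmin, hm]
    simpa using Polynomial.pow_rootMultiplicity_dvd (minpoly K' A) 0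
  obtain ⟨h, hh⟩ := hXm
  have hh0 : h ≠ 0 := by rintro rfl; rw [mul_zero] at hh; exact hne0 hh
  have hne : ∀ k, k < m → LinearMap.ker (φ ^ k) ≠ LinearMap.ker (φ ^ (k + 1)) := by
    intro k hk heq
    have hstab : LinearMap.ker (φ ^ k) = LinearMap.ker (φ ^ m) := by
      have := Module.End.ker_pow_constant heq (m - k)
      rwa [Nat.add_sub_cancel' hk.le] at this
    have hann : Polynomial.aeval φ (X ^ k * h) = 0 := by
      apply LinearMap.ext; intro x
      have h1 : (φ ^ m) (Polynomial.aeval φ h x) = 0 := by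
        have hmp := minpoly.aeval K' φ
        rw [hh, _root_.map_mul, aeval_X_pow] at hmp
        calc (φ ^ m) (Polynomial.aeval φ h x)
            = (φ ^ m * Polynomial.aeval φ h) x := rfl
          _ = 0 := by rw [hmp]; rfl
      have h2 : Polynomial.aeval φ h x ∈ LinearMap.ker (φ ^ m) := h1
      rw [← hstab] at h2
      show (Polynomial.aeval φ (X ^ k * h)) x = 0
      rw [_root_.map_mul, aeval_X_pow]
      exact h2
    have hdvd2 : minpoly K' φ ∣ X ^ k * h := minpoly.dvd K' φ hann
    have hXkh : X ^ k * h ≠ 0 := mul_ne_zero (pow_ne_zero _ X_ne_zero) hh0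
    have hdeg := Polynomial.natDegree_le_of_dvd hdvd2 hXkh
    rw [hh, natDegree_mul (pow_ne_zero _ X_ne_zero) hh0,
      natDegree_mul (pow_ne_zero _ X_ne_zero) hh0, natDegree_X_pow, natDegree_X_pow] at hdeg
    omega
  have hgrow : ∀ k, k ≤ m → 2 * k ≤ Module.finrank K' (LinearMap.ker (φ ^ k)) := by
    intro k
    induction k with
    | zero => intro _; simp
    | succ k ih =>
      intro hk1
      have hk : k < m := hk1
      have h1 := ih hk.le
      have hle : LinearMap.ker (φ ^ k) ≤ LinearMap.ker (φ ^ (k + 1)) := by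
        intro x hx
        rw [LinearMap.mem_ker] at hx ⊢
        rw [pow_succ', Module.End.mul_apply, hx, map_zero]
      have hlt := Submodule.finrank_lt_finrank_of_lt (lt_of_le_of_ne hle (hne k hk))
      obtain ⟨t, ht⟩ := heven (k + 1) (Nat.succ_le_succ (Nat.zero_le _))
      omega
  have hsub : LinearMap.ker (φ ^ m) ≤ φ.maxGenEigenspace 0 := by
    intro x hx
    rw [Module.End.mem_maxGenEigenspace]
    refine ⟨m, ?_⟩
    simpa using hx
  have hfr := Submodule.finrank_mono hsub
  have hmax := LinearMap.finrank_maxGenEigenspace_zero_eq φ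
  calc 2 * m ≤ Module.finrank K' (LinearMap.ker (φ ^ m)) := hgrow m le_rfl
    _ ≤ Module.finrank K' (φ.maxGenEigenspace 0) := hfr
    _ = (LinearMap.charpoly φ).natTrailingDegree := hmax
    _ = A.charpoly.rootMultiplicity 0 := by
        rw [hchar, Polynomial.rootMultiplicity_eq_natTrailingDegree']
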